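/- For d > 1, H(d) ≥ C(d) · arccosh((2cosh(ρ) − d − 1)/(d − 1)) for every ρ > arccosh(d), where C(d) = 1/(√(cosh(ρ)/d + 1)·√((cosh(ρ)+1)/d)); in particular, for each fixed ρ, the right-hand side tends to +∞ as d → 1⁺. -/

import Mathlib

open MeasureTheory Set Real Filter Topology

noncomputable def arccosh (x : ℝ) : ℝ := Real.log (x + Real.sqrt (x ^ 2 - 1))

noncomputable def H (d : ℝ) : ℝ :=
  ∫ u in Set.Ioi (arccosh d), d / Real.sqrt (Real.cosh u ^ 2 - d ^ 2)

lemma arccosh_one : arccosh 1 = 0 := by simp [arccosh]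

lemma cosh_arccosh {d : ℝ} (hd : 1 ≤ d) : Real.cosh (arccosh d) = d := by
  have h1 : (0:ℝ) ≤ d ^ 2 - 1 := by nlinarith
  have hy : (0:ℝ) < d + Real.sqrt (d ^ 2 - 1) := by
    have := Real.sqrt_nonneg (d ^ 2 - 1); linarith
  have hsq : Real.sqrt (d ^ 2 - 1) ^ 2 = d ^ 2 - 1 := Real.sq_sqrt h1
  have hinv : (d + Real.sqrt (d ^ 2 - 1))⁻¹ = d - Real.sqrt (d ^ 2 - 1) :=
    inv_eq_of_mul_eq_one_right (by nlinarith)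
  rw [arccosh, Real.cosh_eq, Real.exp_log hy, Real.exp_neg, Real.exp_log hy, hinv]
  ring

lemma arccosh_pos {d : ℝ} (hd : 1 < d) : 0 < arccosh d := by
  have h1 : (0:ℝ) ≤ d ^ 2 - 1 := by nlinarith
  have : (1:ℝ) < d + Real.sqrt (d ^ 2 - 1) := by
    have := Real.sqrt_nonneg (d ^ 2 - 1); linarith
  exact Real.log_pos this

lemma hasDerivAt_arccosh {x : ℝ} (hx : 1 < x) :
    HasDerivAt arccosh (1 / Real.sqrt (x ^ 2 - 1)) x := by
  have h1 : (0:ℝ) < x ^ 2 - 1 := by nlinarith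
  have hs : 0 < Real.sqrt (x ^ 2 - 1) := Real.sqrt_pos.2 h1
  have hd1 : HasDerivAt (fun y : ℝ => y ^ 2 - 1) (2 * x) x := by
    simpa using ((hasDerivAt_pow 2 x).sub_const 1)
  have hd2 : HasDerivAt (fun y : ℝ => Real.sqrt (y ^ 2 - 1))
      (2 * x / (2 * Real.sqrt (x ^ 2 - 1))) x :=
    (Real.hasDerivAt_sqrt (by positivity : x ^ 2 - 1 ≠ 0)).comp x hd1 |>.congr_deriv (by ring)
  have hd3 : HasDerivAt (fun y : ℝ => y + Real.sqrt (y ^ 2 - 1))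
      (1 + x / Real.sqrt (x ^ 2 - 1)) x := by
    have := (hasDerivAt_id x).add hd2
    refine this.congr_deriv ?_
    field_simp
  have hz : (0:ℝ) < x + Real.sqrt (x ^ 2 - 1) := by positivity
  have := (Real.hasDerivAt_log hz.ne').comp x hd3
  refine this.congr_deriv ?_
  have hsne := hs.ne'
  field_simp
  ring

lemma continuousAt_arccosh {x : ℝ} (hx : 0 < x) : ContinuousAt arccosh x := by
  have hz : x + Real.sqrt (x ^ 2 - 1) ≠ 0 := by positivity
  have hc : ContinuousAt (fun y : ℝ => y + Real.sqrt (y ^ 2 - 1)) x := by fun_prop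
  exact ContinuousAt.log hc hz

set_option maxHeartbeats 1000000 in
lemma part1 (d : ℝ) (hd : 1 < d) (ρ : ℝ) (hρ : arccosh d < ρ) :
    1 / (Real.sqrt (Real.cosh ρ / d + 1) * Real.sqrt ((Real.cosh ρ + 1) / d)) *
        arccosh ((2 * Real.cosh ρ - d - 1) / (d - 1)) ≤ H d := by
  set a := arccosh d with hadef
  set c := Real.cosh ρ with hcdef
  have hd0 : (0:ℝ) < d := by linarith
  have ha : 0 < a := arccosh_pos hd
  have hρ0 : 0 < ρ := ha.trans hρ
  have hcada : Real.cosh a = d := cosh_arccosh hd.le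
  have hdc : d < c := by
    rw [← hcada, hcdef]
    exact Real.cosh_lt_cosh.2 (by rwa [abs_of_pos ha, abs_of_pos hρ0])
  have hc1 : 1 < c := by linarith
  -- notation
  set f : ℝ → ℝ := fun u => d / Real.sqrt (Real.cosh u ^ 2 - d ^ 2) with hfdef
  set g : ℝ → ℝ := fun u => (2 * Real.cosh u - d - 1) / (d - 1) with hgdef
  set G : ℝ → ℝ := fun u => arccosh (g u) with hGdef
  set G' : ℝ → ℝ := fun u => Real.sqrt (Real.cosh u + 1) / Real.sqrt (Real.cosh u - d)
    with hG'def
  set K₀ : ℝ := 1 / (Real.sqrt (c / d + 1) * Real.sqrt ((c + 1) / d)) with hK0def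
  -- basic positivity
  have hcoshpos : ∀ u : ℝ, 0 < Real.cosh u := fun u => Real.cosh_pos (x := u)
  have hK0pos : 0 < K₀ := by
    have e1 : (0:ℝ) < Real.sqrt (c / d + 1) := Real.sqrt_pos.2 (by positivity)
    have e2 : (0:ℝ) < Real.sqrt ((c + 1) / d) := Real.sqrt_pos.2 (by positivity)
    positivity
  -- K₀ in convenient form
  have hK0eq : K₀ = d / (Real.sqrt (c + d) * Real.sqrt (c + 1)) := by
    rw [hK0def]
    have e1 : c / d + 1 = (c + d) / d := by field_simp
    have e2 : Real.sqrt ((c + d) / d) = Real.sqrt (c + d) / Real.sqrt d :=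
      Real.sqrt_div (by positivity) d
    have e3 : Real.sqrt ((c + 1) / d) = Real.sqrt (c + 1) / Real.sqrt d :=
      Real.sqrt_div (by positivity) d
    have e4 : Real.sqrt d * Real.sqrt d = d := Real.mul_self_sqrt hd0.le
    have h1 : (0:ℝ) < Real.sqrt (c + d) := Real.sqrt_pos.2 (by positivity)
    have h2 : (0:ℝ) < Real.sqrt (c + 1) := Real.sqrt_pos.2 (by positivity)
    have h3 : (0:ℝ) < Real.sqrt d := Real.sqrt_pos.2 hd0
    rw [e1, e2, e3]
    field_simp
    exact Real.sq_sqrt hd0.le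
  -- cosh bounds on the interval
  have hcosh_lb : ∀ u, a < u → d < Real.cosh u := by
    intro u hu
    rw [← hcada]
    exact Real.cosh_lt_cosh.2 (by rw [abs_of_pos ha, abs_of_pos (ha.trans hu)]; exact hu)
  have hcosh_ub : ∀ u, u ≤ ρ → 0 < u → Real.cosh u ≤ c := by
    intro u hu hu0
    exact Real.cosh_le_cosh.2 (by rw [abs_of_pos hu0, abs_of_pos hρ0]; exact hu)
  -- convexity-type bound : sinh a * (u - a) ≤ cosh u - d  for u ≥ a
  have hconv : ∀ u, a ≤ u → Real.sinh a * (u - a) ≤ Real.cosh u - d := by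
    intro u hu
    have hmono : MonotoneOn (fun v => Real.cosh v - Real.sinh a * v) (Ici a) := by
      apply monotoneOn_of_deriv_nonneg (convex_Ici a)
        (Continuous.continuousOn (by fun_prop))
      · intro x hx
        exact ((Real.differentiable_cosh x).sub
          ((differentiable_id.const_mul _) x)).differentiableWithinAt
      · intro x hx
        rw [interior_Ici, mem_Ioi] at hx
        have hD : HasDerivAt (fun v => Real.cosh v - Real.sinh a * v)
            (Real.sinh x - Real.sinh a) x := by
          exact ((Real.hasDerivAt_cosh x).sub ((hasDerivAt_id x).const_mul (Real.sinh a))).congr_deriv (by ring)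
        rw [hD.deriv]
        have := Real.sinh_le_sinh.2 hx.le
        linarith
    have := hmono (self_mem_Ici) (mem_Ici.2 hu) hu
    simp only at this
    rw [← hcada]
    linarith
  have hsinha : 0 < Real.sinh a := Real.sinh_pos_iff.2 ha
  -- measurability
  have hfm : Measurable f := by
    apply Measurable.div measurable_const
    exact (Real.continuous_sqrt.comp (by continuity)).measurable
  have hG'm : Measurable G' := by
    apply Measurable.div
    · exact (Real.continuous_sqrt.comp (by continuity)).measurable
    · exact (Real.continuous_sqrt.comp (by continuity)).measurable
  have hfnonneg : ∀ u, 0 ≤ f u := fun u => by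
    rw [hfdef]; positivity
  -- integrability of f on Ioc a ρ
  have hIoc : IntegrableOn f (Ioc a ρ) := by
    set M : ℝ := d / Real.sqrt (2 * d * Real.sinh a) with hMdef
    have hbint : IntegrableOn (fun u => M * (u - a) ^ (-(1/2) : ℝ)) (Ioc a ρ) := by
      have h1 : IntervalIntegrable (fun x : ℝ => x ^ (-(1/2) : ℝ)) volume 0 (ρ - a) :=
        intervalIntegral.intervalIntegrable_rpow' (by norm_num)
      have h2 := (h1.comp_sub_right a)
      rw [zero_add] at h2
      have h3 : IntervalIntegrable (fun x : ℝ => (x - a) ^ (-(1/2) : ℝ)) volume a ρ := by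
        convert h2 using 2
        ring
      rw [intervalIntegrable_iff_integrableOn_Ioc_of_le (by linarith)] at h3
      exact h3.const_mul M
    apply hbint.integrable.mono' (hfm.aestronglyMeasurable)
    rw [ae_restrict_iff' measurableSet_Ioc]
    filter_upwards with u hu
    obtain ⟨hu1, hu2⟩ := hu
    have hcu : d < Real.cosh u := hcosh_lb u hu1
    have hkey : 2 * d * Real.sinh a * (u - a) ≤ Real.cosh u ^ 2 - d ^ 2 := by
      have h1 := hconv u hu1.le
      have h2 : 2 * d ≤ Real.cosh u + d := by linarith
      have hua : (0:ℝ) ≤ u - a := by linarith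
      have h3 : (0:ℝ) ≤ Real.sinh a * (u - a) := by positivity
      have h4 := mul_le_mul h1 h2 (by linarith) (by linarith)
      calc 2 * d * Real.sinh a * (u - a) = Real.sinh a * (u - a) * (2 * d) := by ring
        _ ≤ (Real.cosh u - d) * (Real.cosh u + d) := h4
        _ = Real.cosh u ^ 2 - d ^ 2 := by ring
    have hpos1 : (0:ℝ) < 2 * d * Real.sinh a * (u - a) := by
      have : 0 < u - a := by linarith
      positivity
    have hnorm : ‖f u‖ = f u := Real.norm_of_nonneg (hfnonneg u)
    rw [hnorm]
    have hle : f u ≤ d / Real.sqrt (2 * d * Real.sinh a * (u - a)) := by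
      rw [hfdef]
      apply div_le_div_of_nonneg_left hd0.le (Real.sqrt_pos.2 hpos1)
      exact Real.sqrt_le_sqrt hkey
    refine hle.trans (le_of_eq ?_)
    rw [Real.sqrt_mul (by positivity) (u - a), hMdef]
    have hua : (0:ℝ) < u - a := by linarith
    have hr : (0:ℝ) < (u - a) ^ ((1:ℝ)/2) := Real.rpow_pos_of_pos hua _
    have hN : (0:ℝ) < Real.sqrt (2 * d * Real.sinh a) := Real.sqrt_pos.2 (by positivity)
    rw [Real.sqrt_eq_rpow (u - a), Real.rpow_neg hua.le]
    field_simp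
  -- integrability of f on Ioi ρ
  have hIoi : IntegrableOn f (Ioi ρ) := by
    set ε : ℝ := 1 - d ^ 2 / c ^ 2 with hεdef
    have hεpos : 0 < ε := by
      rw [hεdef]
      have : d ^ 2 / c ^ 2 < 1 := by
        rw [div_lt_one (by positivity)]
        nlinarith
      linarith
    set M₂ : ℝ := 2 * d / Real.sqrt ε with hM2def
    have hbint : IntegrableOn (fun u => M₂ * Real.exp (-u)) (Ioi ρ) := by
      have := (exp_neg_integrableOn_Ioi ρ (one_pos)).const_mul M₂
      simpa [IntegrableOn] using this
    apply hbint.integrable.mono' (hfm.aestronglyMeasurable)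
    rw [ae_restrict_iff' measurableSet_Ioi]
    filter_upwards with u hu
    rw [mem_Ioi] at hu
    have hu0 : 0 < u := hρ0.trans hu
    have hcu : c ≤ Real.cosh u :=
      Real.cosh_le_cosh.2 (by rw [abs_of_pos hρ0, abs_of_pos hu0]; exact hu.le)
    have hc0 : (0:ℝ) < c := by linarith
    have hkey : ε * Real.cosh u ^ 2 ≤ Real.cosh u ^ 2 - d ^ 2 := by
      have h1 : c ^ 2 ≤ Real.cosh u ^ 2 := by nlinarith
      have h2 : d ^ 2 / c ^ 2 * c ^ 2 ≤ d ^ 2 / c ^ 2 * Real.cosh u ^ 2 :=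
        mul_le_mul_of_nonneg_left h1 (by positivity)
      have h3 : d ^ 2 / c ^ 2 * c ^ 2 = d ^ 2 := by field_simp
      rw [hεdef]
      nlinarith
    have hexp : Real.exp u / 2 ≤ Real.cosh u := by
      rw [Real.cosh_eq]
      have := (Real.exp_pos (-u)).le
      linarith
    have hnorm : ‖f u‖ = f u := Real.norm_of_nonneg (hfnonneg u)
    rw [hnorm]
    have step1 : f u ≤ d / Real.sqrt (ε * Real.cosh u ^ 2) := by
      rw [hfdef]
      apply div_le_div_of_nonneg_left hd0.le (Real.sqrt_pos.2 (by positivity))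
      exact Real.sqrt_le_sqrt hkey
    have hsq : Real.sqrt (ε * Real.cosh u ^ 2) = Real.sqrt ε * Real.cosh u := by
      rw [Real.sqrt_mul hεpos.le, Real.sqrt_sq (Real.cosh_pos (x := u)).le]
    have step2 : d / Real.sqrt (ε * Real.cosh u ^ 2) ≤ M₂ * Real.exp (-u) := by
      rw [hsq, hM2def, Real.exp_neg]
      rw [div_le_iff₀ (by positivity)]
      have hse : 0 < Real.sqrt ε := Real.sqrt_pos.2 hεpos
      have hh : Real.exp u / 2 * (Real.exp u)⁻¹ = 1 / 2 := by
        field_simp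
      have h5 : d * 1 ≤ d * (Real.cosh u * (2 * (Real.exp u)⁻¹)) := by
        apply mul_le_mul_of_nonneg_left _ hd0.le
        have := mul_le_mul_of_nonneg_right hexp (le_of_lt (by positivity : (0:ℝ) < 2 * (Real.exp u)⁻¹))
        calc (1:ℝ) = Real.exp u / 2 * (2 * (Real.exp u)⁻¹) := by
              field_simp
          _ ≤ Real.cosh u * (2 * (Real.exp u)⁻¹) := this
      calc d = d * 1 := by ring
        _ ≤ d * (Real.cosh u * (2 * (Real.exp u)⁻¹)) := h5
        _ = 2 * d / Real.sqrt ε * (Real.exp u)⁻¹ * (Real.sqrt ε * Real.cosh u) := by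
            field_simp
    exact step1.trans step2
  have hfint : IntegrableOn f (Ioi a) := by
    rw [← Ioc_union_Ioi_eq_Ioi hρ.le]
    exact hIoc.union hIoi
  -- pointwise inequality K₀ * G' u ≤ f u on Ioc a ρ
  have hpt : ∀ u ∈ Ioc a ρ, K₀ * G' u ≤ f u := by
    intro u hu
    obtain ⟨hu1, hu2⟩ := hu
    set s : ℝ := Real.cosh u with hsdef
    have hs : d < s := hcosh_lb u hu1
    have hsc : s ≤ c := hcosh_ub u hu2 (ha.trans hu1)
    have hfu : f u = d / (Real.sqrt (s - d) * Real.sqrt (s + d)) := by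
      rw [hfdef]
      congr 1
      rw [← Real.sqrt_mul (by linarith) (s + d)]
      congr 1
      rw [hsdef]; ring
    rw [hfu, hK0eq, hG'def]
    have p1 : (0:ℝ) < Real.sqrt (s - d) := Real.sqrt_pos.2 (by linarith)
    have p2 : (0:ℝ) < Real.sqrt (s + d) := Real.sqrt_pos.2 (by linarith)
    have p3 : (0:ℝ) < Real.sqrt (c + d) := Real.sqrt_pos.2 (by linarith)
    have p4 : (0:ℝ) < Real.sqrt (c + 1) := Real.sqrt_pos.2 (by linarith)
    have p5 : (0:ℝ) ≤ Real.sqrt (s + 1) := Real.sqrt_nonneg _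
    have m1 : Real.sqrt (s + 1) ≤ Real.sqrt (c + 1) := Real.sqrt_le_sqrt (by linarith)
    have m2 : Real.sqrt (s + d) ≤ Real.sqrt (c + d) := Real.sqrt_le_sqrt (by linarith)
    rw [div_mul_div_comm, div_le_div_iff₀ (by positivity) (by positivity)]
    have key : Real.sqrt (s + 1) * Real.sqrt (s + d) ≤ Real.sqrt (c + 1) * Real.sqrt (c + d) :=
      mul_le_mul m1 m2 p2.le p4.le
    nlinarith [mul_le_mul_of_nonneg_left key
      (show (0:ℝ) ≤ d * Real.sqrt (s - d) by positivity)]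
  -- nonnegativity of G'
  have hG'nonneg : ∀ u, 0 ≤ G' u := fun u => by rw [hG'def]; positivity
  -- integrability of K₀ * G' on Ioc a ρ
  have hKG'int : IntegrableOn (fun u => K₀ * G' u) (Ioc a ρ) := by
    apply hIoc.integrable.mono' ((hG'm.const_mul K₀).aestronglyMeasurable)
    rw [ae_restrict_iff' measurableSet_Ioc]
    filter_upwards with u hu
    rw [Real.norm_of_nonneg (by positivity : 0 ≤ K₀ * G' u)]
    exact hpt u hu
  have hG'int : IntegrableOn G' (Ioc a ρ) := by
    have := hKG'int.const_mul K₀⁻¹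
    simpa [IntegrableOn, ← mul_assoc, inv_mul_cancel₀ hK0pos.ne', one_mul] using this
  -- derivative of G
  have hGderiv : ∀ u ∈ Ioo a ρ, HasDerivAt G (G' u) u := by
    intro u hu
    obtain ⟨hu1, hu2⟩ := hu
    have hu0 : 0 < u := ha.trans hu1
    set s : ℝ := Real.cosh u with hsdef
    have hs : d < s := hcosh_lb u hu1
    have hgu : 1 < g u := by
      have hge : g u = (2 * s - d - 1) / (d - 1) := by simp only [hgdef, hsdef]
      rw [hge, lt_div_iff₀ (by linarith)]
      linarith
    have hg' : HasDerivAt g (2 * Real.sinh u / (d - 1)) u := by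
      have h0 : HasDerivAt (fun y : ℝ => 2 * Real.cosh y - d - 1) (2 * Real.sinh u) u := by
        simpa using (((Real.hasDerivAt_cosh u).const_mul 2).sub_const d).sub_const 1
      have h1 := h0.div_const (d - 1)
      rw [hgdef]
      exact h1
    have harc := (hasDerivAt_arccosh hgu).comp u hg'
    have hs1 : (0:ℝ) < s - 1 := by linarith
    have hsd : (0:ℝ) < s - d := by linarith
    have hq1 : (0:ℝ) < Real.sqrt (s - 1) := Real.sqrt_pos.2 hs1
    have hq2 : (0:ℝ) < Real.sqrt (s - d) := Real.sqrt_pos.2 hsd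
    have e1 : g u ^ 2 - 1 = 4 * (s - d) * (s - 1) / (d - 1) ^ 2 := by
      have hge : g u = (2 * s - d - 1) / (d - 1) := by simp only [hgdef, hsdef]
      have hne : ((d:ℝ) - 1) ^ 2 ≠ 0 := pow_ne_zero 2 (sub_ne_zero_of_ne hd.ne')
      rw [hge, div_pow, div_sub_one hne]
      congr 1
      ring
    have e2 : Real.sqrt (g u ^ 2 - 1) = 2 * Real.sqrt (s - d) * Real.sqrt (s - 1) / (d - 1) := by
      rw [e1]
      rw [show 4 * (s - d) * (s - 1) / (d - 1) ^ 2
          = (2 * Real.sqrt (s - d) * Real.sqrt (s - 1) / (d - 1)) ^ 2 by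
        rw [div_pow, mul_pow, mul_pow, Real.sq_sqrt hsd.le, Real.sq_sqrt hs1.le]
        norm_num]
      exact Real.sqrt_sq (div_nonneg (by positivity) (by linarith))
    have hsinh : Real.sinh u = Real.sqrt (s - 1) * Real.sqrt (s + 1) := by
      have h2 : Real.sinh u ^ 2 = (s - 1) * (s + 1) := by rw [Real.sinh_sq]; ring
      rw [← Real.sqrt_sq (Real.sinh_nonneg_iff.2 hu0.le), h2, Real.sqrt_mul hs1.le]
    have hval : G' u = 1 / Real.sqrt (g u ^ 2 - 1) * (2 * Real.sinh u / (d - 1)) := by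
      have hGe : G' u = Real.sqrt (s + 1) / Real.sqrt (s - d) := by simp only [hG'def, hsdef]
      rw [hGe, e2, hsinh, one_div_div, div_mul_div_comm,
        div_eq_div_iff hq2.ne' (mul_pos (by positivity) (by linarith : (0:ℝ) < d - 1)).ne']
      ring
    rw [hval]
    exact harc
  -- continuity of G on Icc a ρ
  have hGcont : ContinuousOn G (Icc a ρ) := by
    intro u hu
    apply ContinuousAt.continuousWithinAt
    have hu0 : 0 < u := lt_of_lt_of_le ha hu.1
    have hcu : d ≤ Real.cosh u := by
      rw [← hcada]
      exact Real.cosh_le_cosh.2 (by rw [abs_of_pos ha, abs_of_pos hu0]; exact hu.1)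
    have hgu : 0 < g u := by
      have hge : g u = (2 * Real.cosh u - d - 1) / (d - 1) := by simp only [hgdef]
      rw [hge]
      apply div_pos _ (by linarith)
      linarith
    have hgc : ContinuousAt g u := by
      have : Continuous g := by
        rw [hgdef]
        exact (((continuous_const.mul Real.continuous_cosh).sub continuous_const).sub
          continuous_const).div_const _
      exact this.continuousAt
    exact (continuousAt_arccosh hgu).comp hgc
  -- FTC
  have hG'ii : IntervalIntegrable G' volume a ρ := by
    rw [intervalIntegrable_iff_integrableOn_Ioc_of_le hρ.le]
    exact hG'int
  have hFTC : ∫ u in a..ρ, G' u = G ρ - G a :=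
    intervalIntegral.integral_eq_sub_of_hasDeriv_right_of_le hρ.le hGcont
      (fun x hx => (hGderiv x hx).hasDerivWithinAt) hG'ii
  have hGa : G a = 0 := by
    have hga : g a = 1 := by
      simp only [hgdef]
      rw [hcada, div_eq_one_iff_eq (sub_ne_zero_of_ne hd.ne')]
      ring
    simp only [hGdef]
    rw [hga, arccosh_one]
  have hIoceq : ∫ u in Ioc a ρ, G' u = G ρ := by
    rw [← intervalIntegral.integral_of_le hρ.le, hFTC, hGa, sub_zero]
  -- chain of inequalities
  have step2 : ∫ u in Ioc a ρ, K₀ * G' u ≤ ∫ u in Ioc a ρ, f u :=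
    setIntegral_mono_on hKG'int hIoc measurableSet_Ioc hpt
  have hHd : H d = ∫ u in Ioi a, f u := rfl
  have step1 : ∫ u in Ioc a ρ, f u ≤ H d := by
    rw [hHd]
    exact setIntegral_mono_set hfint (ae_of_all _ hfnonneg)
      (HasSubset.Subset.eventuallyLE Ioc_subset_Ioi_self)
  have hconst : ∫ u in Ioc a ρ, K₀ * G' u = K₀ * ∫ u in Ioc a ρ, G' u :=
    integral_const_mul K₀ G'
  have hfinal : K₀ * G ρ ≤ H d := by
    calc K₀ * G ρ = ∫ u in Ioc a ρ, K₀ * G' u := by rw [hconst, hIoceq]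
      _ ≤ ∫ u in Ioc a ρ, f u := step2
      _ ≤ H d := step1
  exact hfinal


lemma log_le_arccosh {x : ℝ} (hx : 1 ≤ x) : Real.log x ≤ arccosh x :=
  Real.log_le_log (by linarith) (by nlinarith [Real.sqrt_nonneg (x ^ 2 - 1)])

lemma part2 (ρ : ℝ) (hρ : 0 < ρ) :
    Tendsto (fun d : ℝ =>
        1 / (Real.sqrt (Real.cosh ρ / d + 1) * Real.sqrt ((Real.cosh ρ + 1) / d)) *
          arccosh ((2 * Real.cosh ρ - d - 1) / (d - 1)))
      (𝓝[>] (1 : ℝ)) atTop := by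
  set c := Real.cosh ρ with hcdef
  have hc : 1 < c := Real.one_lt_cosh.2 hρ.ne'
  -- first factor tends to a positive limit
  have hA0 : ContinuousAt (fun d : ℝ =>
      1 / (Real.sqrt (c / d + 1) * Real.sqrt ((c + 1) / d))) 1 := by
    have h1 : ContinuousAt (fun d : ℝ => Real.sqrt (c / d + 1)) 1 :=
      (Real.continuous_sqrt.continuousAt).comp
        (((continuousAt_const.div continuousAt_id one_ne_zero)).add continuousAt_const)
    have h2 : ContinuousAt (fun d : ℝ => Real.sqrt ((c + 1) / d)) 1 :=
      (Real.continuous_sqrt.continuousAt).comp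
        ((continuousAt_const.div continuousAt_id one_ne_zero))
    refine continuousAt_const.div (h1.mul h2) ?_
    have e1 : (0:ℝ) < Real.sqrt (c / 1 + 1) := Real.sqrt_pos.2 (by rw [div_one]; linarith)
    have e2 : (0:ℝ) < Real.sqrt ((c + 1) / 1) := Real.sqrt_pos.2 (by rw [div_one]; linarith)
    positivity
  have hLpos : 0 < 1 / (Real.sqrt (c / 1 + 1) * Real.sqrt ((c + 1) / 1)) := by
    have e1 : (0:ℝ) < Real.sqrt (c / 1 + 1) := Real.sqrt_pos.2 (by rw [div_one]; linarith)
    have e2 : (0:ℝ) < Real.sqrt ((c + 1) / 1) := Real.sqrt_pos.2 (by rw [div_one]; linarith)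
    positivity
  have hA : Tendsto (fun d : ℝ => 1 / (Real.sqrt (c / d + 1) * Real.sqrt ((c + 1) / d)))
      (𝓝[>] (1:ℝ)) (𝓝 (1 / (Real.sqrt (c / 1 + 1) * Real.sqrt ((c + 1) / 1)))) :=
    hA0.tendsto.mono_left nhdsWithin_le_nhds
  -- argument of arccosh tends to atTop
  have h3 : Tendsto (fun d : ℝ => d - 1) (𝓝[>] (1:ℝ)) (𝓝[>] (0:ℝ)) := by
    refine tendsto_nhdsWithin_of_tendsto_nhds_of_eventually_within _ ?_ ?_
    · have : Tendsto (fun d : ℝ => d - 1) (𝓝 (1:ℝ)) (𝓝 (1 - 1)) :=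
        (continuousAt_id.sub continuousAt_const).tendsto
      simpa using this.mono_left nhdsWithin_le_nhds
    · filter_upwards [self_mem_nhdsWithin] with d hd
      exact sub_pos.2 (mem_Ioi.1 hd)
  have h2 : Tendsto (fun d : ℝ => (d - 1)⁻¹) (𝓝[>] (1:ℝ)) atTop :=
    tendsto_inv_nhdsGT_zero.comp h3
  have h1 : Tendsto (fun d : ℝ => 2 * c - d - 1) (𝓝[>] (1:ℝ)) (𝓝 (2 * c - 2)) := by
    have : Tendsto (fun d : ℝ => 2 * c - d - 1) (𝓝 (1:ℝ)) (𝓝 (2 * c - 1 - 1)) :=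
      ((continuousAt_const.sub continuousAt_id).sub continuousAt_const).tendsto
    have h := this.mono_left (nhdsWithin_le_nhds (s := Set.Ioi (1:ℝ)))
    convert h using 2; ring
  have hx : Tendsto (fun d : ℝ => (2 * c - d - 1) / (d - 1)) (𝓝[>] (1:ℝ)) atTop := by
    simp only [div_eq_mul_inv]
    exact Filter.Tendsto.pos_mul_atTop (by linarith) h1 h2
  have harc : Tendsto arccosh atTop atTop := by
    refine tendsto_atTop_mono' atTop ?_ Real.tendsto_log_atTop
    filter_upwards [eventually_ge_atTop (1:ℝ)] with x hx
    exact log_le_arccosh hx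
  exact Filter.Tendsto.pos_mul_atTop hLpos hA (harc.comp hx)


/-- For `d > 1` and any `ρ > arccosh d`,
`H(d) ≥ arccosh((2cosh ρ − d − 1)/(d − 1)) / (√(cosh ρ/d + 1)·√((cosh ρ + 1)/d))`;
moreover for each fixed `ρ > 0` the right-hand side tends to `+∞` as `d → 1⁺`. -/
theorem stmt_19 :
    (∀ d : ℝ, 1 < d → ∀ ρ : ℝ, arccosh d < ρ →
      1 / (Real.sqrt (Real.cosh ρ / d + 1) * Real.sqrt ((Real.cosh ρ + 1) / d)) *
          arccosh ((2 * Real.cosh ρ - d - 1) / (d - 1)) ≤ H d) ∧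
    (∀ ρ : ℝ, 0 < ρ →
      Tendsto (fun d : ℝ =>
          1 / (Real.sqrt (Real.cosh ρ / d + 1) * Real.sqrt ((Real.cosh ρ + 1) / d)) *
            arccosh ((2 * Real.cosh ρ - d - 1) / (d - 1)))
        (𝓝[>] (1 : ℝ)) atTop) := by
  exact ⟨part1, part2⟩
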